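/- The budget-quota choice function for proportional utilities (sort X' by increasing wage, add each of the first |X'|−1 contracts if doing so keeps the total wage strictly below B, then always add the highest-wage contract) satisfies the law of aggregate demand: X'' ⊆ X' implies |Ch(X'')| ≤ |Ch(X')|. -/

import Mathlib

private lemma take_sum_le_of_sublist {l₁ l₂ : List ℝ} (h : l₁.Sublist l₂)
    (hs : l₂.Pairwise (· ≤ ·)) :
    ∀ k ≤ l₁.length, (l₂.take k).sum ≤ (l₁.take k).sum := by
  induction h with
  | slnil => intro k hk; obtain rfl := Nat.le_zero.mp hk; simp
  | @cons l₁ l₂ a h ih =>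
      intro k hk
      rcases List.pairwise_cons.mp hs with ⟨ha, hs'⟩
      cases k with
      | zero => simp
      | succ j =>
        have hj : j ≤ l₁.length := by omega
        have hlt : j < l₁.length := hk
        simp only [List.take_succ_cons, List.sum_cons]
        rw [List.sum_take_succ _ j hlt]
        have h1 := ih hs' j hj
        have h2 : a ≤ l₁[j] := ha _ (h.subset (List.getElem_mem hlt))
        linarith
  | @cons_cons l₁ l₂ a h ih =>
      intro k hk
      rcases List.pairwise_cons.mp hs with ⟨ha, hs'⟩
      cases k with
      | zero => simp
      | succ j =>
        have hj : j ≤ l₁.length := by simpa using hk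
        simp only [List.take_succ_cons, List.sum_cons]
        exact add_le_add_right (ih hs' j hj) a

open Finset in
/-- The budget-quota choice function for proportional utilities: sort `A` in
increasing order of wage (the fixed linear order on contracts is consistent with
increasing wage), greedily add each of the first `|A| − 1` contracts while the running
total wage stays strictly below `B` (equivalently, take the longest such prefix), and
finally always add the highest-wage (last) contract. -/
noncomputable def chProp {ι : Type*} [LinearOrder ι] (w : ι → ℝ) (B : ℝ)
    (A : Finset ι) : Finset ι := by
  classical
  exact
    let L := A.sort (· ≤ ·)
    let k := Nat.findGreatest
      (fun k => k ≤ L.length - 1 ∧ ((L.take k).map w).sum < B) (L.length - 1)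
    (L.take k).toFinset ∪ L.getLast?.toFinset

private lemma chProp_card {ι : Type*} [LinearOrder ι] (w : ι → ℝ) (B : ℝ)
    (A : Finset ι) (hA : A.Nonempty) :
    (chProp w B A).card =
      Nat.findGreatest (fun k => k ≤ (A.sort (· ≤ ·)).length - 1 ∧
        (((A.sort (· ≤ ·)).take k).map w).sum < B) ((A.sort (· ≤ ·)).length - 1) + 1 := by
  classical
  set L := A.sort (· ≤ ·) with hL
  set k := Nat.findGreatest (fun k => k ≤ L.length - 1 ∧ ((L.take k).map w).sum < B)
    (L.length - 1) with hk
  have hLne : L ≠ [] := by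
    simp [hL, ← Finset.card_eq_zero, Finset.card_ne_zero.mpr hA, ← List.length_eq_zero_iff,
      Finset.length_sort]
  have hklen : k ≤ L.length - 1 := Nat.findGreatest_le _
  have hlast : L.getLast? = some (L.getLast hLne) := List.getLast?_eq_getLast hLne
  have hnd : L.Nodup := Finset.sort_nodup _ _
  have hlen0 : 0 < L.length := List.length_pos_iff.mpr hLne
  have hnotmem : L.getLast hLne ∉ L.take k := by
    intro hmem
    rw [List.mem_take_iff_getElem] at hmem
    obtain ⟨i, hi, hieq⟩ := hmem
    rw [List.getLast_eq_getElem] at hieq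
    have := (hnd.getElem_inj_iff).mp hieq
    omega
  rw [show chProp w B A = (L.take k).toFinset ∪ L.getLast?.toFinset from rfl, hlast]
  rw [Finset.card_union_of_disjoint (by simpa using hnotmem)]
  have : (L.take k).toFinset.card = k := by
    rw [List.card_toFinset, (hnd.sublist (List.take_sublist _ _)).dedup,
      List.length_take]
    omega
  simp [this]

/-- The budget-quota choice function for proportional utilities
satisfies the law of aggregate demand: `X'' ⊆ X'` implies `|Ch(X'')| ≤ |Ch(X')|`. -/
theorem chProp_law_of_aggregate_demand {ι : Type*} [LinearOrder ι]
    (w : ι → ℝ) (B : ℝ) (hB : 0 < B) (hw : ∀ x, 0 < w x)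
    (hmono : Monotone w)
    (X'' X' : Finset ι) (hne : X''.Nonempty) (hXX : X'' ⊆ X') :
    (chProp w B X'').card ≤ (chProp w B X').card := by
  classical
  have hne' : X'.Nonempty := hne.mono hXX
  rw [chProp_card w B X'' hne, chProp_card w B X' hne']
  set L'' := X''.sort (· ≤ ·) with hL''
  set L' := X'.sort (· ≤ ·) with hL'
  set k := Nat.findGreatest (fun k => k ≤ L''.length - 1 ∧ ((L''.take k).map w).sum < B)
    (L''.length - 1) with hk
  simp only [Nat.add_le_add_iff_right]
  -- sublist relation
  have hsub : L''.Sublist L' := by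
    refine List.sublist_of_subperm_of_pairwise
      ((Finset.sort_nodup _ _).subperm ?_) (Finset.pairwise_sort _ _) (Finset.pairwise_sort _ _)
    intro x hx
    rw [Finset.mem_sort] at hx ⊢
    exact hXX hx
  have hlen : L''.length ≤ L'.length := hsub.length_le
  rcases Nat.eq_zero_or_pos k with h0 | hpos
  · simp [h0]
  obtain ⟨hk1, hk2⟩ := (Nat.findGreatest_eq_iff.1 hk.symm).2.1 hpos.ne'
  have hklen' : k ≤ L'.length - 1 := le_trans hk1 (Nat.sub_le_sub_right hlen 1)
  refine Nat.le_findGreatest hklen' ⟨hklen', ?_⟩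
  have hmapsub : (L''.map w).Sublist (L'.map w) := hsub.map w
  have hsort : (L'.map w).Pairwise (· ≤ ·) :=
    List.Pairwise.map w (fun a b hab => hmono hab) (Finset.pairwise_sort _ _)
  have hkle : k ≤ (L''.map w).length := by
    rw [List.length_map]; omega
  have hstep := take_sum_le_of_sublist hmapsub hsort k hkle
  calc ((L'.take k).map w).sum = ((L'.map w).take k).sum := by rw [List.map_take]
    _ ≤ ((L''.map w).take k).sum := hstep
    _ = ((L''.take k).map w).sum := by rw [List.map_take]
    _ < B := hk2
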